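/- If a distribution F with density f on [0,1] satisfies the condition F((s−1)/s) ≤ (s'/(1−s'))·E[γ], where s = V'(0) > 1 is the initial slope and s' = V'(p_x) < 1 relates to the slope at the flat point of a concave increasing value function V with V(0)=0 and V(p_x)=p_x, then for any price p* < p_x, the expected utility E[max(γV(p*), V(p*) − p*)] is at most E[γ]·V(p_x) = E[γ]·p_x; hence the utility-optimal price is (arbitrarily close to) p_x. -/

import Mathlib

/-- Theorem 4.1 (utility optimality of no-sale pricing): if
`F((s−1)/s) ≤ (s'/(1−s'))·E[γ]` where `s = V'(0) > 1` and `s' = V'(p_x) < 1`,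
then every price `p* < p_x` earns expected utility at most `E[γ]·p_x`, the
expected utility at the no-sale price `p_x`; hence the utility-optimal price is
(arbitrarily close to) `p_x`. -/
theorem no_sale_price_utility_optimal
    (F fγ V V' : ℝ → ℝ) (px : ℝ) (hpx : 0 < px)
    (hfnonneg : ∀ x ∈ Set.Icc (0:ℝ) 1, 0 ≤ fγ x)
    (hfcont : ContinuousOn fγ (Set.Icc 0 1))
    (hftot : (∫ x in (0:ℝ)..1, fγ x) = 1)
    (hF : ∀ t : ℝ, F t = ∫ x in (0:ℝ)..t, fγ x)
    (hV0 : V 0 = 0) (hVpx : V px = px)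
    (hVflat : ∀ p : ℝ, px ≤ p → V p = px)
    (hVmono : MonotoneOn V (Set.Icc 0 px))
    (hVconc : ConcaveOn ℝ (Set.Icc 0 px) V)
    (hV' : ∀ p ∈ Set.Icc (0:ℝ) px, HasDerivAt V (V' p) p)
    (hs : 1 < V' 0) (hs' : V' px < 1)
    (hcond : F ((V' 0 - 1) / V' 0)
      ≤ (V' px / (1 - V' px)) * ∫ x in (0:ℝ)..1, x * fγ x) :
    ∀ p : ℝ, 0 < p → p < px →
      (∫ x in (0:ℝ)..1, max (x * V p) (V p - p) * fγ x)
        ≤ (∫ x in (0:ℝ)..1, x * fγ x) * px := by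
  intro p hp hppx
  set v := V p with hv
  set s := V' 0 with hsdef
  set s' := V' px with hs'def
  set Eγ := ∫ x in (0:ℝ)..1, x * fγ x with hEγ
  have hpmem : p ∈ Set.Icc (0:ℝ) px := ⟨hp.le, hppx.le⟩
  have h0mem : (0:ℝ) ∈ Set.Icc (0:ℝ) px := ⟨le_rfl, hpx.le⟩
  have hpxmem : px ∈ Set.Icc (0:ℝ) px := ⟨hpx.le, le_rfl⟩
  have hv0 : 0 ≤ v := by
    have := hVmono h0mem hpmem hp.le
    rw [hV0] at this; exact this
  have hvpx : v ≤ px := by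
    have := hVmono hpmem hpxmem hppx.le
    rw [hVpx] at this; exact this
  -- E[γ] ≥ 0
  have hEγ0 : 0 ≤ Eγ := by
    apply intervalIntegral.integral_nonneg (by norm_num)
    intro x hx
    exact mul_nonneg hx.1 (hfnonneg x hx)
  -- slope bounds
  have hslopeA : v ≤ s * p := by
    have := hVconc.slope_le_of_hasDerivAt h0mem hpmem hp (hV' 0 h0mem)
    rw [slope_def_field, hV0] at this
    have := (div_le_iff₀ hp).mp (by simpa using this)
    linarith
  have hslopeB : s' * (px - p) ≤ px - v := by
    have := hVconc.le_slope_of_hasDerivAt hpmem hpxmem hppx (hV' px hpxmem)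
    rw [slope_def_field, hVpx] at this
    have h2 : 0 < px - p := by linarith
    have := (le_div_iff₀ h2).mp this
    linarith
  -- integrability helpers
  have hintf : ∀ a b : ℝ, 0 ≤ a → b ≤ 1 → a ≤ b → IntervalIntegrable fγ MeasureTheory.volume a b := by
    intro a b ha hb hab
    exact (hfcont.mono (Set.Icc_subset_Icc ha hb)).intervalIntegrable_of_Icc hab
  have hcontmax : Continuous (fun x : ℝ => max (x * v) (v - p)) :=
    (continuous_id.mul continuous_const).max continuous_const
  have hintmax : ∀ a b : ℝ, 0 ≤ a → b ≤ 1 → a ≤ b →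
      IntervalIntegrable (fun x => max (x * v) (v - p) * fγ x) MeasureTheory.volume a b := by
    intro a b ha hb hab
    exact ((hcontmax.continuousOn.mul (hfcont.mono (Set.Icc_subset_Icc ha hb))).intervalIntegrable_of_Icc hab)
  have hintxv : ∀ a b : ℝ, 0 ≤ a → b ≤ 1 → a ≤ b →
      IntervalIntegrable (fun x => x * v * fγ x) MeasureTheory.volume a b := by
    intro a b ha hb hab
    exact (((continuous_id.mul continuous_const).continuousOn.mul
      (hfcont.mono (Set.Icc_subset_Icc ha hb))).intervalIntegrable_of_Icc hab)
  -- F is monotone on [0,1]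
  have hFmono : ∀ a b : ℝ, 0 ≤ a → a ≤ b → b ≤ 1 → F a ≤ F b := by
    intro a b ha hab hb
    rw [hF, hF]
    rw [← intervalIntegral.integral_add_adjacent_intervals (hintf 0 a (le_refl 0) (hab.trans hb) ha)
      (hintf a b ha hb hab)]
    have : 0 ≤ ∫ x in a..b, fγ x := by
      apply intervalIntegral.integral_nonneg hab
      intro x hx
      exact hfnonneg x ⟨ha.trans hx.1, hx.2.trans hb⟩
    linarith
  have hFnonneg : ∀ a : ℝ, 0 ≤ a → a ≤ 1 → 0 ≤ F a := by
    intro a ha ha1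
    rw [hF]
    apply intervalIntegral.integral_nonneg ha
    intro x hx
    exact hfnonneg x ⟨hx.1, hx.2.trans ha1⟩
  -- ∫ x*v*f = v * Eγ
  have hxvint : (∫ x in (0:ℝ)..1, x * v * fγ x) = v * Eγ := by
    rw [hEγ, ← intervalIntegral.integral_const_mul]
    congr 1; ext x; ring
  by_cases hcase : v ≤ p
  · -- easy case: max = x*v pointwise
    have heq : (∫ x in (0:ℝ)..1, max (x * v) (v - p) * fγ x)
        = ∫ x in (0:ℝ)..1, x * v * fγ x := by
      apply intervalIntegral.integral_congr
      intro x hx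
      rw [Set.uIcc_of_le (by norm_num : (0:ℝ) ≤ 1)] at hx
      have : max (x * v) (v - p) = x * v :=
        max_eq_left (le_trans (by linarith) (mul_nonneg hx.1 hv0))
      dsimp only; rw [this]
    rw [heq, hxvint]
    have : v ≤ px := hvpx
    nlinarith
  · push_neg at hcase
    have hvpos : 0 < v := hp.trans hcase
    set c := (v - p) / v with hc
    have hc0 : 0 < c := div_pos (by linarith) hvpos
    have hc1 : c < 1 := by
      rw [div_lt_one hvpos]; linarith
    have hspos : 0 < s := by linarith
    -- c ≤ (s-1)/s
    have hcle : c ≤ (s - 1) / s := by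
      rw [div_le_div_iff₀ hvpos hspos]
      nlinarith
    have hs1 : (s - 1) / s ≤ 1 := by
      rw [div_le_one hspos]; linarith
    -- split integral
    have hsplit : (∫ x in (0:ℝ)..1, max (x * v) (v - p) * fγ x)
        = (∫ x in (0:ℝ)..c, max (x * v) (v - p) * fγ x)
          + ∫ x in c..1, max (x * v) (v - p) * fγ x :=
      (intervalIntegral.integral_add_adjacent_intervals
        (hintmax 0 c le_rfl hc1.le hc0.le) (hintmax c 1 hc0.le le_rfl hc1.le)).symm
    -- on [c,1] max = x*v
    have heq2 : (∫ x in c..1, max (x * v) (v - p) * fγ x) = ∫ x in c..1, x * v * fγ x := by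
      apply intervalIntegral.integral_congr
      intro x hx
      rw [Set.uIcc_of_le hc1.le] at hx
      have hxc : c ≤ x := hx.1
      have : v - p ≤ x * v := by
        have := (div_le_iff₀ hvpos).mp (hc ▸ hxc)
        linarith [this]
      dsimp only; rw [max_eq_left this]
    -- on [0,c] max ≤ x*v + (v-p)
    have hle1 : (∫ x in (0:ℝ)..c, max (x * v) (v - p) * fγ x)
        ≤ ∫ x in (0:ℝ)..c, (x * v + (v - p)) * fγ x := by
      apply intervalIntegral.integral_mono_on hc0.le (hintmax 0 c le_rfl hc1.le hc0.le)
      · exact (((continuous_id.mul continuous_const).add continuous_const).continuousOn.mul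
          (hfcont.mono (Set.Icc_subset_Icc le_rfl hc1.le))).intervalIntegrable_of_Icc hc0.le
      · intro x hx
        have hf0 : 0 ≤ fγ x := hfnonneg x ⟨hx.1, hx.2.trans hc1.le⟩
        apply mul_le_mul_of_nonneg_right _ hf0
        have hxv : 0 ≤ x * v := mul_nonneg hx.1 hv0
        rcases max_cases (x * v) (v - p) with ⟨h, _⟩ | ⟨h, _⟩ <;> rw [h] <;> linarith
    have heq3 : (∫ x in (0:ℝ)..c, (x * v + (v - p)) * fγ x)
        = (∫ x in (0:ℝ)..c, x * v * fγ x) + (v - p) * F c := by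
      rw [hF]
      rw [← intervalIntegral.integral_const_mul, ← intervalIntegral.integral_add (g := fun x => (v - p) * fγ x)
        (hintxv 0 c le_rfl hc1.le hc0.le)
        ((continuous_const.continuousOn.mul (hfcont.mono (Set.Icc_subset_Icc le_rfl hc1.le))).intervalIntegrable_of_Icc hc0.le)]
      congr 1; ext x; ring
    have hxvsplit : (∫ x in (0:ℝ)..c, x * v * fγ x) + (∫ x in c..1, x * v * fγ x) = v * Eγ := by
      rw [intervalIntegral.integral_add_adjacent_intervals
        (hintxv 0 c le_rfl hc1.le hc0.le) (hintxv c 1 hc0.le le_rfl hc1.le), hxvint]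
    -- chain
    have hFc : F c ≤ s' / (1 - s') * Eγ := by
      calc F c ≤ F ((s - 1) / s) := hFmono c ((s-1)/s) hc0.le hcle hs1
        _ ≤ s' / (1 - s') * Eγ := hcond
    have key : (∫ x in (0:ℝ)..1, max (x * v) (v - p) * fγ x)
        ≤ v * Eγ + (v - p) * (s' / (1 - s') * Eγ) := by
      rw [hsplit, heq2]
      calc (∫ x in (0:ℝ)..c, max (x * v) (v - p) * fγ x) + ∫ x in c..1, x * v * fγ x
          ≤ ((∫ x in (0:ℝ)..c, x * v * fγ x) + (v - p) * F c) + ∫ x in c..1, x * v * fγ x := by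
            rw [← heq3]; linarith
        _ = v * Eγ + (v - p) * F c := by linarith [hxvsplit]
        _ ≤ v * Eγ + (v - p) * (s' / (1 - s') * Eγ) := by
            have := mul_le_mul_of_nonneg_left hFc (by linarith : (0:ℝ) ≤ v - p)
            linarith
    refine key.trans ?_
    -- final arithmetic: v + (v-p) * s'/(1-s') ≤ px
    have h1s' : 0 < 1 - s' := by linarith
    have hfin : v * Eγ + (v - p) * (s' / (1 - s') * Eγ) ≤ px * Eγ := by
      have hkey : v + (v - p) * (s' / (1 - s')) ≤ px := by
        have h2 : (v - p) * (s' / (1 - s')) ≤ px - v := by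
          rw [← mul_div_assoc, div_le_iff₀ h1s']
          nlinarith [hslopeB]
        linarith
      have h3 := mul_le_mul_of_nonneg_right hkey hEγ0
      calc v * Eγ + (v - p) * (s' / (1 - s') * Eγ)
          = (v + (v - p) * (s' / (1 - s'))) * Eγ := by ring
        _ ≤ px * Eγ := h3
    calc v * Eγ + (v - p) * (s' / (1 - s') * Eγ) ≤ px * Eγ := hfin
      _ = Eγ * px := mul_comm _ _
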